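/- Let Δ₁, Δ₂ be two (N−1)-simplices in ℝ^N sharing a common (N−2)-face, with centers (barycenters) A₁, A₂ and let A₁₂ be the barycenter of the shared face. Then the broken line A₁A₁₂ ∪ A₁₂A₂ is contained in Δ₁ ∪ Δ₂ and avoids ∂(Δ₁ ∪ Δ₂), and the distance from A_i to ∂Δ_i is positive. -/

import Mathlib

open scoped Classical
/-- The boundary of the simplex with vertex set `V`: the union of its proper faces. -/
def simplexBoundary {N : ℕ} (V : Finset (EuclideanSpace ℝ (Fin N))) :
    Set (EuclideanSpace ℝ (Fin N)) :=
  ⋃ W ∈ V.powerset.erase V, convexHull ℝ (W : Set (EuclideanSpace ℝ (Fin N)))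

section Aux

variable {N : ℕ}

local notation "E'" => EuclideanSpace ℝ (Fin N)

lemma sum_mem_convexHull' (V : Finset E') {w : E' → ℝ}
    (h0 : ∀ v ∈ V, 0 ≤ w v) (h1 : ∑ v ∈ V, w v = 1) :
    ∑ v ∈ V, w v • v ∈ convexHull ℝ (V : Set E') := by
  rw [Finset.convexHull_eq]
  exact ⟨w, h0, h1, by rw [Finset.centerMass_eq_of_sum_1 _ _ h1]; simp⟩

lemma mem_convexHull_exists' (V : Finset E') {x : E'}
    (hx : x ∈ convexHull ℝ (V : Set E')) :
    ∃ w : E' → ℝ, (∀ v ∈ V, 0 ≤ w v) ∧ ∑ v ∈ V, w v = 1 ∧ ∑ v ∈ V, w v • v = x := by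
  rw [Finset.convexHull_eq] at hx
  obtain ⟨w, h0, h1, h2⟩ := hx
  refine ⟨w, h0, h1, ?_⟩
  rw [← h2, Finset.centerMass_eq_of_sum_1 _ _ h1]; simp

lemma unique_coords' (V : Finset E')
    (hi : AffineIndependent ℝ (fun x : ↥(V : Set E') => (x : E')))
    {w₁ w₂ : E' → ℝ} (h₁ : ∑ v ∈ V, w₁ v = 1) (h₂ : ∑ v ∈ V, w₂ v = 1)
    (he : ∑ v ∈ V, w₁ v • v = ∑ v ∈ V, w₂ v • v) : ∀ v ∈ V, w₁ v = w₂ v := by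
  have hi' : AffineIndependent ℝ (fun x : {x // x ∈ V} => (x : E')) := hi
  have hs₁ : ∑ x ∈ V.attach, (w₁ ∘ (↑)) x = 1 := by
    simp only [Function.comp_apply]; rwa [Finset.sum_attach V w₁]
  have hs₂ : ∑ x ∈ V.attach, (w₂ ∘ (↑)) x = 1 := by
    simp only [Function.comp_apply]; rwa [Finset.sum_attach V w₂]
  have heq : V.attach.affineCombination ℝ ((↑) : {x // x ∈ V} → E') (w₁ ∘ (↑)) =
      V.attach.affineCombination ℝ ((↑) : {x // x ∈ V} → E') (w₂ ∘ (↑)) := by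
    rw [Finset.attach_affineCombination_coe, Finset.attach_affineCombination_coe,
      Finset.affineCombination_eq_linear_combination _ _ _ h₁,
      Finset.affineCombination_eq_linear_combination _ _ _ h₂]
    simpa using he
  have hind := hi'.indicator_eq_of_affineCombination_eq V.attach V.attach _ _ hs₁ hs₂ heq
  intro v hv
  have := congrFun hind ⟨v, hv⟩
  simpa [Set.indicator, Finset.mem_attach] using this

lemma not_mem_simplexBoundary' (V : Finset E')
    (hi : AffineIndependent ℝ (fun x : ↥(V : Set E') => (x : E')))
    {w : E' → ℝ} (h1 : ∑ v ∈ V, w v = 1) (hpos : ∀ v ∈ V, 0 < w v) :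
    (∑ v ∈ V, w v • v) ∉ simplexBoundary V := by
  intro hmem
  simp only [simplexBoundary, Set.mem_iUnion] at hmem
  obtain ⟨W, hW, hxW⟩ := hmem
  rw [Finset.mem_erase, Finset.mem_powerset] at hW
  obtain ⟨hne, hsub⟩ := hW
  obtain ⟨v₀, hv₀V, hv₀W⟩ := Finset.exists_of_ssubset (lt_of_le_of_ne hsub hne)
  obtain ⟨u, hu0, hu1, hux⟩ := mem_convexHull_exists' W hxW
  set u' : E' → ℝ := fun v => if v ∈ W then u v else 0 with hu'
  have hWV : V ∩ W = W := Finset.inter_eq_right.2 hsub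
  have hu'1 : ∑ v ∈ V, u' v = 1 := by
    rw [hu', Finset.sum_ite_mem, hWV]; exact hu1
  have hu'x : ∑ v ∈ V, u' v • v = ∑ v ∈ V, w v • v := by
    have : ∑ v ∈ V, u' v • v = ∑ v ∈ V, (if v ∈ W then u v • v else 0) := by
      apply Finset.sum_congr rfl; intro v _; by_cases h : v ∈ W <;> simp [hu', h]
    rw [this, Finset.sum_ite_mem, hWV, hux]
  have := unique_coords' V hi hu'1 h1 hu'x v₀ hv₀V
  rw [hu'] at this
  simp only [hv₀W, if_false] at this
  exact (hpos v₀ hv₀V).ne' this.symm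

lemma centroid_mem_intrinsicInterior' (F : Finset E') (hne : F.Nonempty)
    (hi : AffineIndependent ℝ (fun x : ↥(F : Set E') => (x : E'))) :
    F.centroid ℝ id ∈ intrinsicInterior ℝ (convexHull ℝ (F : Set E')) := by
  haveI : Nonempty ↥(F : Set E') := ⟨⟨hne.choose, hne.choose_spec⟩⟩
  set S := affineSpan ℝ (F : Set E') with hS
  haveI : Nonempty S := ⟨⟨hne.choose, subset_affineSpan ℝ _ hne.choose_spec⟩⟩
  set p₀ : S := Classical.arbitrary S
  set ε : S.direction ≃ᵃⁱ[ℝ] S := AffineIsometryEquiv.vaddConst ℝ p₀ with hε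
  set φ : S.direction →ᵃⁱ[ℝ] E' := S.subtypeₐᵢ.comp ε.toAffineIsometry with hφ
  set p : ↥(F : Set E') → S := fun x => ⟨(x : E'), subset_affineSpan ℝ _ x.2⟩ with hp
  set q : ↥(F : Set E') → S.direction := fun x => ε.symm (p x) with hq
  have hφq : ∀ x, φ (q x) = (x : E') := by
    intro x
    show S.subtypeₐᵢ (ε (ε.symm (p x))) = _
    rw [AffineIsometryEquiv.apply_symm_apply]
    rfl
  have hφq' : (⇑φ ∘ q) = (fun x : ↥(F : Set E') => (x : E')) := funext hφq
  have hqind : AffineIndependent ℝ q := by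
    apply AffineIndependent.of_comp φ.toAffineMap
    have : (⇑φ.toAffineMap ∘ q) = (fun x : ↥(F : Set E') => (x : E')) := hφq'
    rw [this]; exact hi
  have hrangep : Set.range p = ((↑) ⁻¹' (F : Set E') : Set S) := by
    ext y
    constructor
    · rintro ⟨x, rfl⟩; exact x.2
    · intro hy; exact ⟨⟨(y : E'), hy⟩, Subtype.ext rfl⟩
  have hspan : affineSpan ℝ (Set.range q) = ⊤ := by
    have h1 : Set.range q = ⇑ε.symm.toAffineMap '' Set.range p := by
      rw [← Set.range_comp]; rfl
    rw [h1, ← AffineSubspace.map_span, hrangep, affineSpan_coe_preimage_eq_top,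
      AffineMap.map_top_of_surjective _ ε.symm.surjective]
  set b : AffineBasis (↥(F : Set E')) ℝ S.direction := ⟨q, hqind, hspan⟩ with hb
  have hc : Finset.univ.centroid ℝ q ∈ interior (convexHull ℝ (Set.range q)) := by
    have := b.centroid_mem_interior_convexHull
    exact this
  have himg : ⇑φ '' (convexHull ℝ (Set.range q)) = convexHull ℝ (F : Set E') := by
    rw [← φ.coe_toAffineMap, AffineMap.image_convexHull, φ.coe_toAffineMap,
      ← Set.range_comp, hφq', Subtype.range_coe]
  have hcent : φ (Finset.univ.centroid ℝ q) = F.centroid ℝ id := by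
    have hw : ∑ i ∈ Finset.univ, Finset.univ.centroidWeights ℝ (ι := ↥(F : Set E')) i = 1 := by
      apply Finset.sum_centroidWeights_eq_one_of_nonempty
      exact Finset.univ_nonempty
    rw [Finset.centroid_def, ← φ.coe_toAffineMap,
      Finset.map_affineCombination _ _ _ hw]
    have : (⇑φ.toAffineMap ∘ q) = (fun x : ↥(F : Set E') => (x : E')) := hφq'
    rw [this, ← Finset.centroid_def]
    exact Finset.centroid_univ ℝ F
  rw [← himg, AffineIsometry.image_intrinsicInterior]
  exact ⟨_, interior_subset_intrinsicInterior hc, hcent⟩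

end Aux

section Main

variable {N : ℕ}

local notation "E'" => EuclideanSpace ℝ (Fin N)

lemma centroid_eq_sum (V : Finset E') (hne : V.Nonempty) :
    V.centroid ℝ id = ∑ v ∈ V, (V.card : ℝ)⁻¹ • v := by
  rw [Finset.centroid_def, Finset.affineCombination_eq_linear_combination _ _ _
    (V.sum_centroidWeights_eq_one_of_nonempty ℝ hne)]
  simp [Finset.centroidWeights_apply]

lemma seg_lemma (hN : 2 ≤ N) (V₁ V₂ : Finset E')
    (hc₁ : V₁.card = N)
    (hi₁ : AffineIndependent ℝ (fun x : ↥(V₁ : Set E') => (x : E')))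
    (hface : (V₁ ∩ V₂).card = N - 1)
    (hinter : convexHull ℝ (V₁ : Set E') ∩ convexHull ℝ (V₂ : Set E') =
      convexHull ℝ ((V₁ ∩ V₂ : Finset E') : Set E')) :
    ∀ x ∈ segment ℝ (V₁.centroid ℝ id) ((V₁ ∩ V₂).centroid ℝ id),
      x ∈ convexHull ℝ (V₁ : Set E') ∧
      x ∉ (simplexBoundary V₁ ∪ simplexBoundary V₂) \
        intrinsicInterior ℝ (convexHull ℝ ((V₁ ∩ V₂ : Finset E') : Set E')) := by
  set F := V₁ ∩ V₂ with hF
  have hFV : F ⊆ V₁ := Finset.inter_subset_left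
  have hFne : F.Nonempty := Finset.card_pos.1 (by omega)
  have hV₁ne : V₁.Nonempty := Finset.card_pos.1 (by omega)
  have hNpos : (0:ℝ) < (V₁.card : ℝ) := by
    have : 0 < V₁.card := by omega
    exact_mod_cast this
  have hFpos : (0:ℝ) < (F.card : ℝ) := by
    have : 0 < F.card := by omega
    exact_mod_cast this
  have hiF : AffineIndependent ℝ (fun x : ↥(F : Set E') => (x : E')) :=
    hi₁.mono (by exact_mod_cast Finset.coe_subset.2 hFV)
  have hA1 := centroid_eq_sum V₁ hV₁ne
  have hA12 := centroid_eq_sum F hFne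
  rintro x ⟨a, b, ha, hb, hab, rfl⟩
  set w : E' → ℝ := fun v => a * (V₁.card : ℝ)⁻¹ + (if v ∈ V₂ then b * (F.card : ℝ)⁻¹ else 0)
    with hw
  have h1 : ∑ v ∈ V₁, a * (V₁.card : ℝ)⁻¹ = a := by
    rw [Finset.sum_const, nsmul_eq_mul]
    field_simp
  have h2 : ∑ v ∈ V₁, (if v ∈ V₂ then b * (F.card : ℝ)⁻¹ else 0) = b := by
    rw [Finset.sum_ite_mem, ← hF, Finset.sum_const, nsmul_eq_mul]
    field_simp
  have hsum : ∑ v ∈ V₁, w v = 1 := by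
    rw [hw]; rw [Finset.sum_add_distrib, h1, h2, hab]
  have hxeq : ∑ v ∈ V₁, w v • v = a • V₁.centroid ℝ id + b • F.centroid ℝ id := by
    rw [hA1, hA12, Finset.smul_sum, Finset.smul_sum]
    have expand : ∑ v ∈ V₁, w v • v
        = ∑ v ∈ V₁, (a * (V₁.card : ℝ)⁻¹) • v
          + ∑ v ∈ V₁, (if v ∈ V₂ then (b * (F.card : ℝ)⁻¹) • v else 0) := by
      rw [← Finset.sum_add_distrib]
      refine Finset.sum_congr rfl fun v _ => ?_
      by_cases h : v ∈ V₂ <;> simp [hw, h, add_smul]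
    rw [expand, Finset.sum_ite_mem, ← hF]
    congr 1
    · exact Finset.sum_congr rfl fun v _ => (smul_smul _ _ _).symm
    · exact Finset.sum_congr rfl fun v _ => (smul_smul _ _ _).symm
  have hwnonneg : ∀ v ∈ V₁, 0 ≤ w v := by
    intro v _
    have : (0:ℝ) ≤ (if v ∈ V₂ then b * (F.card : ℝ)⁻¹ else 0) := by
      split <;> positivity
    have h0 : (0:ℝ) ≤ a * (V₁.card : ℝ)⁻¹ := by positivity
    rw [hw]; dsimp only; linarith
  have hmemhull : a • V₁.centroid ℝ id + b • F.centroid ℝ id ∈ convexHull ℝ (V₁ : Set E') := by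
    rw [← hxeq]
    exact sum_mem_convexHull' V₁ hwnonneg hsum
  refine ⟨hmemhull, ?_⟩
  by_cases ha0 : a = 0
  · -- the endpoint A₁₂, which is in the relative interior of the face
    have hb1 : b = 1 := by linarith
    have hpt : a • V₁.centroid ℝ id + b • F.centroid ℝ id = F.centroid ℝ id := by
      rw [ha0, hb1]; simp
    rw [hpt]
    intro hmem
    exact hmem.2 (centroid_mem_intrinsicInterior' F hFne hiF)
  · have ha' : 0 < a := lt_of_le_of_ne ha (Ne.symm ha0)
    have hpos : ∀ v ∈ V₁, 0 < w v := by
      intro v _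
      have h0 : (0:ℝ) < a * (V₁.card : ℝ)⁻¹ := by positivity
      have : (0:ℝ) ≤ (if v ∈ V₂ then b * (F.card : ℝ)⁻¹ else 0) := by
        split <;> positivity
      rw [hw]; dsimp only; linarith
  -- not in boundary of V₁
    have hnb1 : (∑ v ∈ V₁, w v • v) ∉ simplexBoundary V₁ :=
      not_mem_simplexBoundary' V₁ hi₁ hsum hpos
  -- not in boundary of V₂
    have hnb2 : (∑ v ∈ V₁, w v • v) ∉ simplexBoundary V₂ := by
      intro hmem
      have hbsub : simplexBoundary V₂ ⊆ convexHull ℝ (V₂ : Set E') := by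
        intro y hy
        simp only [simplexBoundary, Set.mem_iUnion] at hy
        obtain ⟨W, hW, hyW⟩ := hy
        rw [Finset.mem_erase, Finset.mem_powerset] at hW
        exact convexHull_mono (Finset.coe_subset.2 hW.2) hyW
      have hxF : (∑ v ∈ V₁, w v • v) ∈ convexHull ℝ ((F : Finset E') : Set E') := by
        rw [hF, ← hinter]
        exact ⟨by rw [hxeq]; exact hmemhull, hbsub hmem⟩
      obtain ⟨u, hu0, hu1, hux⟩ := mem_convexHull_exists' F hxF
      set u' : E' → ℝ := fun v => if v ∈ F then u v else 0 with hu'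
      have hFV' : V₁ ∩ F = F := Finset.inter_eq_right.2 hFV
      have hu'1 : ∑ v ∈ V₁, u' v = 1 := by
        rw [hu', Finset.sum_ite_mem, hFV']; exact hu1
      have hu'x : ∑ v ∈ V₁, u' v • v = ∑ v ∈ V₁, w v • v := by
        have : ∑ v ∈ V₁, u' v • v = ∑ v ∈ V₁, (if v ∈ F then u v • v else 0) := by
          refine Finset.sum_congr rfl fun v _ => ?_
          by_cases h : v ∈ F <;> simp [hu', h]
        rw [this, Finset.sum_ite_mem, hFV', hux]
      obtain ⟨v₁, hv₁V, hv₁F⟩ := Finset.exists_of_ssubset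
        (lt_of_le_of_ne hFV (by intro h; rw [h] at hface; omega))
      have := unique_coords' V₁ hi₁ hu'1 hsum hu'x v₁ hv₁V
      rw [hu'] at this
      simp only [hv₁F, if_false] at this
      exact (hpos v₁ hv₁V).ne' this.symm
    rw [← hxeq]
    intro hmem
    rcases hmem.1 with h | h
    · exact hnb1 h
    · exact hnb2 h

end Main


/-- Let `Δ₁, Δ₂` be two `(N-1)`-simplices in `ℝ^N` sharing a common `(N-2)`-face, with
barycenters `A₁, A₂`, and let `A₁₂` be the barycenter of the shared face.  Then the
broken line `A₁A₁₂ ∪ A₁₂A₂` lies in `Δ₁ ∪ Δ₂` and avoids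
`∂(Δ₁ ∪ Δ₂) = (∂Δ₁ ∪ ∂Δ₂) ∖ relint(Δ₁ ∩ Δ₂)`, and `dist(Aᵢ, ∂Δᵢ) > 0`. -/
theorem stmt14 (N : ℕ) (hN : 2 ≤ N) (V₁ V₂ : Finset (EuclideanSpace ℝ (Fin N)))
    (hc₁ : V₁.card = N) (hc₂ : V₂.card = N)
    (hi₁ : AffineIndependent ℝ
      (fun x : ↥(V₁ : Set (EuclideanSpace ℝ (Fin N))) => (x : EuclideanSpace ℝ (Fin N))))
    (hi₂ : AffineIndependent ℝ
      (fun x : ↥(V₂ : Set (EuclideanSpace ℝ (Fin N))) => (x : EuclideanSpace ℝ (Fin N))))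
    (hface : (V₁ ∩ V₂).card = N - 1)
    (hinter : convexHull ℝ (V₁ : Set (EuclideanSpace ℝ (Fin N))) ∩
        convexHull ℝ (V₂ : Set (EuclideanSpace ℝ (Fin N))) =
      convexHull ℝ ((V₁ ∩ V₂ : Finset (EuclideanSpace ℝ (Fin N))) :
        Set (EuclideanSpace ℝ (Fin N)))) :
    (segment ℝ (V₁.centroid ℝ id) ((V₁ ∩ V₂).centroid ℝ id) ∪
        segment ℝ ((V₁ ∩ V₂).centroid ℝ id) (V₂.centroid ℝ id)) ⊆
      convexHull ℝ (V₁ : Set (EuclideanSpace ℝ (Fin N))) ∪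
        convexHull ℝ (V₂ : Set (EuclideanSpace ℝ (Fin N))) ∧
    Disjoint
      (segment ℝ (V₁.centroid ℝ id) ((V₁ ∩ V₂).centroid ℝ id) ∪
        segment ℝ ((V₁ ∩ V₂).centroid ℝ id) (V₂.centroid ℝ id))
      ((simplexBoundary V₁ ∪ simplexBoundary V₂) \
        intrinsicInterior ℝ (convexHull ℝ ((V₁ ∩ V₂ : Finset (EuclideanSpace ℝ (Fin N))) :
          Set (EuclideanSpace ℝ (Fin N))))) ∧
    0 < Metric.infDist (V₁.centroid ℝ id) (simplexBoundary V₁) ∧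
    0 < Metric.infDist (V₂.centroid ℝ id) (simplexBoundary V₂) := by
  have hface' : (V₂ ∩ V₁).card = N - 1 := by rwa [Finset.inter_comm]
  have hinter' : convexHull ℝ (V₂ : Set (EuclideanSpace ℝ (Fin N))) ∩
      convexHull ℝ (V₁ : Set (EuclideanSpace ℝ (Fin N))) =
      convexHull ℝ ((V₂ ∩ V₁ : Finset (EuclideanSpace ℝ (Fin N))) :
        Set (EuclideanSpace ℝ (Fin N))) := by
    rw [Set.inter_comm, Finset.inter_comm]; exact hinter
  have L1 := seg_lemma hN V₁ V₂ hc₁ hi₁ hface hinter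
  have L2 := seg_lemma hN V₂ V₁ hc₂ hi₂ hface' hinter'
  rw [Finset.inter_comm V₂ V₁] at L2
  have hseg2 : segment ℝ ((V₁ ∩ V₂).centroid ℝ id) (V₂.centroid ℝ id) =
      segment ℝ (V₂.centroid ℝ id) ((V₁ ∩ V₂).centroid ℝ id) := segment_symm ℝ _ _
  -- centroid not in boundary
  have hnotbd : ∀ (V : Finset (EuclideanSpace ℝ (Fin N))), V.card = N →
      AffineIndependent ℝ
        (fun x : ↥(V : Set (EuclideanSpace ℝ (Fin N))) => (x : EuclideanSpace ℝ (Fin N))) →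
      V.centroid ℝ id ∉ simplexBoundary V := by
    intro V hc hi
    have hVne : V.Nonempty := Finset.card_pos.1 (by omega)
    have hNpos : (0:ℝ) < (V.card : ℝ) := by
      have : 0 < V.card := by omega
      exact_mod_cast this
    rw [centroid_eq_sum V hVne]
    refine not_mem_simplexBoundary' V hi ?_ ?_
    · rw [Finset.sum_const, nsmul_eq_mul]; field_simp
    · intro v _; positivity
  have hbd_closed : ∀ (V : Finset (EuclideanSpace ℝ (Fin N))), IsClosed (simplexBoundary V) := by
    intro V
    apply Set.Finite.isClosed_biUnion (Finset.finite_toSet _)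
    intro W _
    exact ((W.finite_toSet).isCompact_convexHull (𝕜 := ℝ)).isClosed
  have hbd_ne : ∀ (V : Finset (EuclideanSpace ℝ (Fin N))), V.card = N →
      (simplexBoundary V).Nonempty := by
    intro V hc
    obtain ⟨v, hv⟩ := Finset.card_pos.1 (show 0 < V.card by omega)
    refine ⟨v, ?_⟩
    simp only [simplexBoundary, Set.mem_iUnion]
    refine ⟨{v}, ?_, ?_⟩
    · rw [Finset.mem_erase, Finset.mem_powerset]
      constructor
      · intro h
        have := congrArg Finset.card h
        simp at this
        omega
      · exact Finset.singleton_subset_iff.2 hv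
    · simp
  refine ⟨?_, ?_, ?_, ?_⟩
  · rintro x (hx | hx)
    · exact Or.inl (L1 x hx).1
    · rw [hseg2] at hx
      exact Or.inr (L2 x hx).1
  · rw [Set.disjoint_left]
    rintro x (hx | hx)
    · exact (L1 x hx).2
    · rw [hseg2] at hx
      have := (L2 x hx).2
      rwa [Set.union_comm (simplexBoundary V₂)] at this
  · exact ((hbd_closed V₁).notMem_iff_infDist_pos (hbd_ne V₁ hc₁)).1 (hnotbd V₁ hc₁ hi₁)
  · exact ((hbd_closed V₂).notMem_iff_infDist_pos (hbd_ne V₂ hc₂)).1 (hnotbd V₂ hc₂ hi₂)
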